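/- Let a < b be reals, let p, q be real exponents with 1 ≤ q < p < ∞, let ξ, η ≥ 0 and let h : ℝ → ℝ satisfy |h(u₁) − h(u₂)| ≤ (ξ + η ρ^{(p−q)/q}) |u₁ − u₂| whenever |u₁|, |u₂| ≤ ρ, for every ρ > 0. Then for every ψ₁, ψ₂ ∈ L^p([a,b]), ‖h∘ψ₁ − h∘ψ₂‖_{L^q} ≤ (ξ (b−a)^{(p−q)/(pq)} + η ‖max(|ψ₁|, |ψ₂|)‖_{L^p}^{(p−q)/q}) ‖ψ₁ − ψ₂‖_{L^p}, where max(|ψ₁|,|ψ₂|) denotes the pointwise maximum. -/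

import Mathlib

open MeasureTheory ENNReal NNReal

/-- Refined estimate for the superposition operator via the pointwise maximum:
`‖h∘ψ₁ - h∘ψ₂‖_{L^q} ≤ (ξ (b-a)^{(p-q)/(pq)} + η ‖max(|ψ₁|,|ψ₂|)‖_{L^p}^{(p-q)/q}) ‖ψ₁ - ψ₂‖_{L^p}`. -/
theorem superposition_operator_pointwise_max_estimate
    (a b : ℝ) (hab : a < b) (p q : ℝ) (hq : 1 ≤ q) (hqp : q < p)
    (ξ η : ℝ) (hξ : 0 ≤ ξ) (hη : 0 ≤ η) (h : ℝ → ℝ)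
    (hh : ∀ ρ : ℝ, 0 < ρ → ∀ u₁ u₂ : ℝ, |u₁| ≤ ρ → |u₂| ≤ ρ →
      |h u₁ - h u₂| ≤ (ξ + η * ρ ^ ((p - q) / q)) * |u₁ - u₂|) :
    ∀ ψ₁ ψ₂ : ℝ → ℝ,
      MemLp ψ₁ (ENNReal.ofReal p) (volume.restrict (Set.Icc a b)) →
      MemLp ψ₂ (ENNReal.ofReal p) (volume.restrict (Set.Icc a b)) →
      eLpNorm (fun t => h (ψ₁ t) - h (ψ₂ t)) (ENNReal.ofReal q)
          (volume.restrict (Set.Icc a b)) ≤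
        ENNReal.ofReal (ξ * (b - a) ^ ((p - q) / (p * q)) +
            η * ((eLpNorm (fun t => max |ψ₁ t| |ψ₂ t|) (ENNReal.ofReal p)
              (volume.restrict (Set.Icc a b))).toReal) ^ ((p - q) / q)) *
          eLpNorm (fun t => ψ₁ t - ψ₂ t) (ENNReal.ofReal p)
            (volume.restrict (Set.Icc a b)) := by
  intro ψ₁ ψ₂ hψ₁ hψ₂
  set μ := volume.restrict (Set.Icc a b) with hμdef
  have hq0 : (0:ℝ) < q := lt_of_lt_of_le one_pos hq
  have hp0 : (0:ℝ) < p := hq0.trans hqp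
  have hpq0 : (0:ℝ) < p - q := sub_pos.mpr hqp
  set α : ℝ := (p - q) / q with hαdef
  have hα0 : 0 < α := div_pos hpq0 hq0
  set d : ℝ → ℝ := fun t => ψ₁ t - ψ₂ t with hddef
  set ρ : ℝ → ℝ := fun t => max |ψ₁ t| |ψ₂ t| with hρdef
  have hρ0 : ∀ t, 0 ≤ ρ t := fun t => le_max_of_le_left (abs_nonneg _)
  -- membership of ρ in L^p
  have hρ_mem : MemLp ρ (ENNReal.ofReal p) μ := by
    have := (hψ₁.norm).sup (hψ₂.norm)
    simpa only [Real.norm_eq_abs, Pi.sup_def] using this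
  have hρ_sm : AEStronglyMeasurable ρ μ := hρ_mem.1
  have hd_sm : AEStronglyMeasurable d μ := hψ₁.1.sub hψ₂.1
  have habs_sm : AEStronglyMeasurable (fun t => |d t|) μ := by
    simpa only [Real.norm_eq_abs] using hd_sm.norm
  have hφ_sm : AEStronglyMeasurable (fun t => ρ t ^ α) μ :=
    (Real.continuous_rpow_const hα0.le).comp_aestronglyMeasurable hρ_sm
  -- pointwise estimate
  have hpt : ∀ t, ‖h (ψ₁ t) - h (ψ₂ t)‖ ≤ ‖ξ * |d t| + η * (ρ t ^ α * |d t|)‖ := by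
    intro t
    have hRHS : 0 ≤ ξ * |d t| + η * (ρ t ^ α * |d t|) := by
      have := hρ0 t
      positivity
    rw [Real.norm_eq_abs, Real.norm_eq_abs, abs_of_nonneg hRHS]
    rcases (hρ0 t).lt_or_eq with hpos | hzero
    · have := hh (ρ t) hpos (ψ₁ t) (ψ₂ t) (le_max_left _ _) (le_max_right _ _)
      calc |h (ψ₁ t) - h (ψ₂ t)| ≤ (ξ + η * ρ t ^ α) * |ψ₁ t - ψ₂ t| := this
        _ = ξ * |d t| + η * (ρ t ^ α * |d t|) := by simp only [hddef]; ring
    · have h1 : ψ₁ t = 0 := by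
        have : |ψ₁ t| ≤ 0 := hzero ▸ le_max_left _ _
        exact abs_eq_zero.mp (le_antisymm this (abs_nonneg _))
      have h2 : ψ₂ t = 0 := by
        have : |ψ₂ t| ≤ 0 := hzero ▸ le_max_right _ _
        exact abs_eq_zero.mp (le_antisymm this (abs_nonneg _))
      simp [h1, h2, hRHS]
  have hQ1 : (1:ℝ≥0∞) ≤ ENNReal.ofReal q := by
    rw [← ENNReal.ofReal_one]; exact ENNReal.ofReal_le_ofReal hq
  -- abbreviations
  set P := ENNReal.ofReal p
  set Q := ENNReal.ofReal q
  set R := ENNReal.ofReal (p * q / (p - q))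
  have hDeq : eLpNorm (fun t => |d t|) Q μ = eLpNorm d Q μ := by
    simpa only [Real.norm_eq_abs] using eLpNorm_norm (F := ℝ) d (p := Q) (μ := μ)
  have hDeqP : eLpNorm (fun t => |d t|) P μ = eLpNorm d P μ := by
    simpa only [Real.norm_eq_abs] using eLpNorm_norm (F := ℝ) d (p := P) (μ := μ)
  -- first term estimate
  have hμuniv : μ Set.univ = ENNReal.ofReal (b - a) := by
    rw [hμdef, Measure.restrict_apply_univ, Real.volume_Icc]
  have hT1 : eLpNorm (fun t => ξ * |d t|) Q μ ≤
      ENNReal.ofReal (ξ * (b - a) ^ ((p - q) / (p * q))) * eLpNorm d P μ := by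
    have hsmul : eLpNorm (fun t => ξ * |d t|) Q μ
        = ENNReal.ofReal ξ * eLpNorm (fun t => |d t|) Q μ := by
      have := eLpNorm_const_smul (𝕜 := ℝ) ξ (fun t => |d t|) Q μ
      simpa [Real.enorm_eq_ofReal hξ, smul_eq_mul, ENNReal.smul_def,
        show (ξ • fun t => |d t|) = fun t => ξ * |d t| from rfl] using this
    rw [hsmul, hDeq]
    have hle : eLpNorm d Q μ ≤ eLpNorm d P μ * μ Set.univ ^ (1 / Q.toReal - 1 / P.toReal) :=
      eLpNorm_le_eLpNorm_mul_rpow_measure_univ (ENNReal.ofReal_le_ofReal hqp.le) hd_sm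
    have hexp : 1 / Q.toReal - 1 / P.toReal = (p - q) / (p * q) := by
      rw [ENNReal.toReal_ofReal hq0.le, ENNReal.toReal_ofReal hp0.le,
        div_sub_div _ _ hq0.ne' hp0.ne', one_mul, mul_one, mul_comm q p]
    rw [hexp, hμuniv, ENNReal.ofReal_rpow_of_pos (sub_pos.mpr hab)] at hle
    calc ENNReal.ofReal ξ * eLpNorm d Q μ
        ≤ ENNReal.ofReal ξ * (eLpNorm d P μ * ENNReal.ofReal ((b - a) ^ ((p - q) / (p * q)))) :=
          mul_le_mul_right hle _
      _ = ENNReal.ofReal (ξ * (b - a) ^ ((p - q) / (p * q))) * eLpNorm d P μ := by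
          rw [ENNReal.ofReal_mul hξ]; ring
  -- second term estimate
  set M : ℝ := (eLpNorm ρ P μ).toReal with hMdef
  have hT2 : eLpNorm (fun t => η * (ρ t ^ α * |d t|)) Q μ ≤
      ENNReal.ofReal (η * M ^ α) * eLpNorm d P μ := by
    have hsmul : eLpNorm (fun t => η * (ρ t ^ α * |d t|)) Q μ
        = ENNReal.ofReal η * eLpNorm (fun t => ρ t ^ α * |d t|) Q μ := by
      have := eLpNorm_const_smul (𝕜 := ℝ) η (fun t => ρ t ^ α * |d t|) Q μ
      simpa [Real.enorm_eq_ofReal hη, smul_eq_mul, ENNReal.smul_def,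
        show (η • fun t => ρ t ^ α * |d t|) = fun t => η * (ρ t ^ α * |d t|) from rfl] using this
    rw [hsmul]
    have hpqr : 1 / Q = 1 / R + 1 / P := by
      have hR0 : (0:ℝ) < p * q / (p - q) := div_pos (mul_pos hp0 hq0) hpq0
      rw [one_div, one_div, one_div, ← ENNReal.ofReal_inv_of_pos hq0,
        ← ENNReal.ofReal_inv_of_pos hR0, ← ENNReal.ofReal_inv_of_pos hp0,
        ← ENNReal.ofReal_add (by positivity) (by positivity)]
      congr 1
      rw [inv_div]
      field_simp
      ring
    have hHolder : eLpNorm (fun t => ρ t ^ α * |d t|) Q μ ≤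
        eLpNorm (fun t => ρ t ^ α) R μ * eLpNorm (fun t => |d t|) P μ := by
      haveI : ENNReal.HolderTriple R P Q := ⟨by simpa only [one_div] using hpqr.symm⟩
      have := eLpNorm_smul_le_mul_eLpNorm (μ := μ) (p := R) (q := P) (r := Q)
        (f := fun t => |d t|) (φ := fun t => ρ t ^ α) habs_sm hφ_sm
      simpa only [Pi.smul_apply', smul_eq_mul, Pi.mul_def] using this
    have hphi : eLpNorm (fun t => ρ t ^ α) R μ ≤ ENNReal.ofReal (M ^ α) := by
      have hnorm : (fun t => ρ t ^ α) = fun t => ‖ρ t‖ ^ α := by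
        funext t; rw [Real.norm_eq_abs, abs_of_nonneg (hρ0 t)]
      rw [hnorm, eLpNorm_norm_rpow ρ hα0]
      have hRα : R * ENNReal.ofReal α = P := by
        rw [← ENNReal.ofReal_mul (le_of_lt (div_pos (mul_pos hp0 hq0) hpq0))]
        congr 1
        rw [hαdef, div_mul_div_comm,
          show p * q * (p - q) = p * ((p - q) * q) by ring,
          mul_div_assoc, div_self (mul_pos hpq0 hq0).ne', mul_one]
      rw [hRα]
      have hfin : eLpNorm ρ P μ = ENNReal.ofReal M := by
        rw [hMdef, ENNReal.ofReal_toReal hρ_mem.2.ne]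
      rw [hfin, ENNReal.ofReal_rpow_of_nonneg ENNReal.toReal_nonneg hα0.le]
    calc ENNReal.ofReal η * eLpNorm (fun t => ρ t ^ α * |d t|) Q μ
        ≤ ENNReal.ofReal η * (ENNReal.ofReal (M ^ α) * eLpNorm d P μ) := by
          rw [← hDeqP]
          exact mul_le_mul_right (hHolder.trans (mul_le_mul_left hphi _)) _
      _ = ENNReal.ofReal (η * M ^ α) * eLpNorm d P μ := by
          rw [ENNReal.ofReal_mul hη, mul_assoc]
  -- combine
  calc eLpNorm (fun t => h (ψ₁ t) - h (ψ₂ t)) Q μ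
      ≤ eLpNorm (fun t => ξ * |d t| + η * (ρ t ^ α * |d t|)) Q μ := eLpNorm_mono hpt
    _ ≤ eLpNorm (fun t => ξ * |d t|) Q μ + eLpNorm (fun t => η * (ρ t ^ α * |d t|)) Q μ :=
        eLpNorm_add_le (habs_sm.const_mul ξ) ((hφ_sm.mul habs_sm).const_mul η) hQ1
    _ ≤ ENNReal.ofReal (ξ * (b - a) ^ ((p - q) / (p * q))) * eLpNorm d P μ +
        ENNReal.ofReal (η * M ^ α) * eLpNorm d P μ := add_le_add hT1 hT2
    _ = ENNReal.ofReal (ξ * (b - a) ^ ((p - q) / (p * q)) + η * M ^ α) * eLpNorm d P μ := by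
        rw [ENNReal.ofReal_add
          (mul_nonneg hξ (Real.rpow_nonneg (sub_pos.mpr hab).le _))
          (mul_nonneg hη (Real.rpow_nonneg ENNReal.toReal_nonneg _)), add_mul]
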